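/- Strict differential variant rule (dV>): Let f be globally Lipschitz on ℝⁿ, p polynomial, ε > 0 constant. If ∇p(y)·f(y) ≥ ε whenever p(y) ≤ 0, then every solution of x' = f(x) satisfies p(φ(τ)) > 0 for some τ ≥ 0. -/

import Mathlib

open MvPolynomial

private lemma eval_hasDerivAt {n : ℕ} (φ : ℝ → (Fin n → ℝ)) (v : Fin n → ℝ) (t : ℝ)
    (hφ : HasDerivAt φ v t) (q : MvPolynomial (Fin n) ℝ) :
    HasDerivAt (fun s => eval (φ s) q) (∑ i : Fin n, eval (φ t) (pderiv i q) * v i) t := by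
  induction q using MvPolynomial.induction_on with
  | C a =>
      simpa using (hasDerivAt_const t (a : ℝ))
  | add q r hq hr =>
      have := (hq.add hr : HasDerivAt (fun s => eval (φ s) q + eval (φ s) r) _ t)
      simp only [map_add, add_mul, Finset.sum_add_distrib]
      exact this
  | mul_X q i hq =>
      have hxi : HasDerivAt (fun s => φ s i) (v i) t := hasDerivAt_pi.1 hφ i
      have := hq.mul hxi
      have heq : (fun s => eval (φ s) (q * X i)) = fun y => eval (φ y) q * φ y i := by
        funext s; simp
      rw [heq]
      refine this.congr_deriv (Eq.symm ?_)
      have hterm : ∀ j : Fin n, eval (φ t) (pderiv j (q * X i)) * v j =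
          eval (φ t) (pderiv j q) * φ t i * v j
            + (if j = i then eval (φ t) q * v j else 0) := by
        intro j
        rw [pderiv_mul, pderiv_X]
        by_cases hji : j = i <;> simp [hji, Pi.single_apply, add_mul]
      rw [Finset.sum_congr rfl (fun j _ => hterm j), Finset.sum_add_distrib]
      congr 1
      · rw [Finset.sum_mul]
        exact Finset.sum_congr rfl fun j _ => by ring
      · rw [Finset.sum_eq_single i] <;> simp +contextual

/-- Strict differential variant rule dV>: if `f` is globally Lipschitz and the
Lie derivative of `p` along `f` is at least `ε > 0` wherever `p ≤ 0`, then along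
every (globally existing) solution, `p` eventually becomes strictly positive. -/
theorem dV_gt (n : ℕ) (f : (Fin n → ℝ) → (Fin n → ℝ)) (K : NNReal)
    (hf : LipschitzWith K f) (p : MvPolynomial (Fin n) ℝ) (ε : ℝ) (hε : 0 < ε)
    (hlie : ∀ y : Fin n → ℝ, eval y p ≤ 0 →
      ε ≤ ∑ i : Fin n, eval y (pderiv i p) * f y i)
    (x₀ : Fin n → ℝ) (φ : ℝ → (Fin n → ℝ)) (hφ0 : φ 0 = x₀)
    (hsol : ∀ t : ℝ, 0 ≤ t → HasDerivAt φ (f (φ t)) t) :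
    ∃ τ : ℝ, 0 ≤ τ ∧ 0 < eval (φ τ) p := by
  by_contra hcon
  push_neg at hcon
  set g : ℝ → ℝ := fun s => eval (φ s) p with hg
  have hgd : ∀ t : ℝ, 0 ≤ t →
      HasDerivAt g (∑ i : Fin n, eval (φ t) (pderiv i p) * f (φ t) i) t :=
    fun t ht => eval_hasDerivAt φ _ t (hsol t ht) p
  -- h s = ε * s - g s is antitone on [0, ∞)
  set h : ℝ → ℝ := fun s => ε * s - g s with hh
  have hanti : AntitoneOn h (Set.Ici (0:ℝ)) := by
    apply antitoneOn_of_deriv_nonpos (convex_Ici 0)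
    · intro t ht
      exact ((hasDerivAt_const t ε |>.mul (hasDerivAt_id t)).sub (hgd t ht)).continuousAt.continuousWithinAt
    · intro t ht
      rw [interior_Ici] at ht
      exact (((hasDerivAt_const t ε |>.mul (hasDerivAt_id t)).sub (hgd t ht.le)).differentiableAt).differentiableWithinAt
    · intro t ht
      rw [interior_Ici] at ht
      have hd : HasDerivAt h (ε * 1 - ∑ i : Fin n, eval (φ t) (pderiv i p) * f (φ t) i) t :=
        ((hasDerivAt_id t).const_mul ε).sub (hgd t ht.le)
      rw [hd.deriv]
      have := hlie (φ t) (hcon t ht.le)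
      linarith
  have hg0 : g 0 ≤ 0 := hcon 0 le_rfl
  set T : ℝ := (1 - g 0) / ε with hT
  have hT0 : 0 ≤ T := div_nonneg (by linarith) hε.le
  have key : ε * T - g T ≤ ε * 0 - g 0 := hanti (Set.self_mem_Ici) hT0 hT0
  have hεT : ε * T = 1 - g 0 := by rw [hT]; field_simp
  have hgT : g T ≤ 0 := hcon T hT0
  linarith
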